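/- Let q ≥ 2 be an integer and let x₀ = x₀(q) be the unique real solution in [1, ∞) of q^(x−1) = ∏_{i=1}^{q−1}(x/i + 1). Then x₀ > ⌊ln(ln q)⌋; consequently χ_q ≥ ⌊ln(ln q)⌋, where χ_q = x₀ − 1 if x₀ ∈ ℕ and χ_q = ⌊x₀⌋ otherwise. -/

import Mathlib

open Finset

lemma aux_log_ge (y : ℝ) (hy : 0 < y) : 1 - y⁻¹ ≤ Real.log y := by
  have h := Real.log_le_sub_one_of_pos (x := y⁻¹) (by positivity)
  rw [Real.log_inv] at h
  linarith

open Finset in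
theorem stmt_15 (q : ℕ) (hq : 2 ≤ q) (x₀ : ℝ) (hx₀ : 1 ≤ x₀)
    (heq : (q : ℝ) ^ (x₀ - 1) = ∏ i ∈ Icc 1 (q - 1), (x₀ / (i : ℝ) + 1))
    (huniq : ∀ x : ℝ, 1 ≤ x →
      (q : ℝ) ^ (x - 1) = ∏ i ∈ Icc 1 (q - 1), (x / (i : ℝ) + 1) → x = x₀)
    (χ : ℤ)
    (hχ₁ : (∃ m : ℕ, 0 < m ∧ x₀ = (m : ℝ)) → χ = ⌊x₀⌋ - 1)
    (hχ₂ : (¬ ∃ m : ℕ, 0 < m ∧ x₀ = (m : ℝ)) → χ = ⌊x₀⌋) :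
    (⌊Real.log (Real.log q)⌋ : ℝ) < x₀ ∧ ⌊Real.log (Real.log q)⌋ ≤ χ := by
  set L : ℤ := ⌊Real.log (Real.log q)⌋ with hLdef
  have hq2 : (2:ℝ) ≤ (q:ℝ) := by exact_mod_cast hq
  have hq0 : (0:ℝ) < (q:ℝ) := by linarith
  have hlogq : 0 < Real.log q := Real.log_pos (by linarith)
  have hx0nn : (0:ℝ) ≤ x₀ := by linarith
  have hfloor1 : 1 ≤ ⌊x₀⌋ := Int.le_floor.mpr (by exact_mod_cast hx₀)
  have hmain : (L:ℝ) < x₀ := by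
    by_contra hcon
    push_neg at hcon
    have hL1 : (1:ℝ) ≤ (L:ℝ) := le_trans hx₀ hcon
    have hLs : (L:ℝ) ≤ Real.log (Real.log q) := Int.floor_le _
    have hexpL : Real.exp (L:ℝ) ≤ Real.log q := by
      calc Real.exp (L:ℝ) ≤ Real.exp (Real.log (Real.log q)) := Real.exp_le_exp.mpr hLs
        _ = Real.log q := Real.exp_log hlogq
    -- exp L > L^2
    have hexp_gt : ((L:ℝ))^2 < Real.exp (L:ℝ) := by
      have h2 : 1 + (L:ℝ)/4 < Real.exp ((L:ℝ)/4) := by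
        have := Real.add_one_lt_exp (x := (L:ℝ)/4) (by positivity)
        linarith
      have h3 : Real.exp (L:ℝ)
          = Real.exp ((L:ℝ)/4) * Real.exp ((L:ℝ)/4) * Real.exp ((L:ℝ)/4)
            * Real.exp ((L:ℝ)/4) := by
        rw [← Real.exp_add, ← Real.exp_add, ← Real.exp_add]; ring_nf
      have ha : (0:ℝ) < 1 + (L:ℝ)/4 := by linarith
      have h4 : ((1 + (L:ℝ)/4)^2)^2 < (Real.exp ((L:ℝ)/4) * Real.exp ((L:ℝ)/4))^2 := by
        have hb : (1 + (L:ℝ)/4)^2 < Real.exp ((L:ℝ)/4) * Real.exp ((L:ℝ)/4) := by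
          nlinarith [Real.exp_pos ((L:ℝ)/4)]
        nlinarith [Real.exp_pos ((L:ℝ)/4), sq_nonneg (1 + (L:ℝ)/4)]
      have h5 : (L:ℝ)^2 ≤ ((1 + (L:ℝ)/4)^2)^2 := by
        nlinarith [sq_nonneg ((L:ℝ) - 4), sq_nonneg (L:ℝ)]
      calc ((L:ℝ))^2 ≤ ((1 + (L:ℝ)/4)^2)^2 := h5
        _ < (Real.exp ((L:ℝ)/4) * Real.exp ((L:ℝ)/4))^2 := h4
        _ = Real.exp (L:ℝ) := by rw [h3]; ring
    obtain ⟨n, hn⟩ : ∃ n, q = n + 1 := ⟨q - 1, by omega⟩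
    have hq1 : q - 1 = n := by omega
    rw [hq1] at heq
    have hqn : (q:ℝ) = (n:ℝ) + 1 := by rw [hn]; push_cast; ring
    have hprodne : ∀ i ∈ Icc 1 n, (x₀ / (i:ℝ) + 1) ≠ 0 := by
      intro i hi
      have h1 : 1 ≤ i := (mem_Icc.mp hi).1
      have : (1:ℝ) ≤ (i:ℝ) := by exact_mod_cast h1
      positivity
    have hSeq : (x₀ - 1) * Real.log q = ∑ i ∈ Icc 1 n, Real.log (x₀ / (i:ℝ) + 1) := by
      calc (x₀ - 1) * Real.log q = Real.log ((q:ℝ) ^ (x₀ - 1)) := (Real.log_rpow hq0 _).symm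
        _ = Real.log (∏ i ∈ Icc 1 n, (x₀ / (i:ℝ) + 1)) := by rw [heq]
        _ = ∑ i ∈ Icc 1 n, Real.log (x₀ / (i:ℝ) + 1) := Real.log_prod hprodne
    have hterm : ∀ i ∈ Icc 1 n,
        x₀ * (Real.log (x₀ + (i:ℝ) + 1) - Real.log (x₀ + (i:ℝ)))
          ≤ Real.log (x₀ / (i:ℝ) + 1) := by
      intro i hi
      have h1 : 1 ≤ i := (mem_Icc.mp hi).1
      have hi1 : (1:ℝ) ≤ (i:ℝ) := by exact_mod_cast h1
      have hxi : (0:ℝ) < x₀ + (i:ℝ) := by linarith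
      have hA : Real.log (x₀ + (i:ℝ) + 1) - Real.log (x₀ + (i:ℝ)) ≤ 1/(x₀ + (i:ℝ)) := by
        rw [← Real.log_div (by linarith) (by linarith)]
        have h2 := Real.log_le_sub_one_of_pos (x := (x₀ + (i:ℝ) + 1)/(x₀ + (i:ℝ)))
          (by positivity)
        have h3 : (x₀ + (i:ℝ) + 1)/(x₀ + (i:ℝ)) - 1 = 1/(x₀ + (i:ℝ)) := by
          field_simp
          ring
        linarith
      have hB : x₀/(x₀ + (i:ℝ)) ≤ Real.log (x₀ / (i:ℝ) + 1) := by
        have hy : (0:ℝ) < x₀ / (i:ℝ) + 1 := by positivity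
        have h4 := aux_log_ge _ hy
        have h5 : 1 - (x₀ / (i:ℝ) + 1)⁻¹ = x₀/(x₀ + (i:ℝ)) := by
          rw [inv_eq_one_div]
          field_simp
          ring
        linarith [h5 ▸ h4]
      calc x₀ * (Real.log (x₀ + (i:ℝ) + 1) - Real.log (x₀ + (i:ℝ)))
          ≤ x₀ * (1/(x₀ + (i:ℝ))) := mul_le_mul_of_nonneg_left hA hx0nn
        _ = x₀/(x₀ + (i:ℝ)) := by ring
        _ ≤ _ := hB
    have htel : ∑ i ∈ Icc 1 n, (Real.log (x₀ + (i:ℝ) + 1) - Real.log (x₀ + (i:ℝ)))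
        = Real.log (x₀ + (n:ℝ) + 1) - Real.log (x₀ + 1) := by
      have h6 := Finset.sum_range_sub (fun j => Real.log (x₀ + (j:ℝ) + 1)) n
      rw [← Finset.Ico_add_one_right_eq_Icc, Finset.sum_Ico_eq_sum_range]
      simp only [Nat.succ_sub_one, Nat.add_sub_cancel]
      norm_num at h6
      rw [← h6, ← Finset.sum_sub_distrib]
      apply Finset.sum_congr rfl
      intro j _
      have e1 : x₀ + ((1 + j : ℕ):ℝ) + 1 = x₀ + ((j:ℝ) + 1) + 1 := by push_cast; ring
      have e2 : x₀ + ((1 + j : ℕ):ℝ) = x₀ + (j:ℝ) + 1 := by push_cast; ring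
      rw [e1, e2]
    have hsum : x₀ * (Real.log (x₀ + (n:ℝ) + 1) - Real.log (x₀ + 1))
        ≤ ∑ i ∈ Icc 1 n, Real.log (x₀ / (i:ℝ) + 1) := by
      calc x₀ * (Real.log (x₀ + (n:ℝ) + 1) - Real.log (x₀ + 1))
          = ∑ i ∈ Icc 1 n, x₀ * (Real.log (x₀ + (i:ℝ) + 1) - Real.log (x₀ + (i:ℝ))) := by
            rw [← Finset.mul_sum, htel]
        _ ≤ _ := Finset.sum_le_sum hterm
    have hmono : Real.log q ≤ Real.log (x₀ + (n:ℝ) + 1) := by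
      apply Real.log_le_log hq0
      rw [hqn]; linarith
    have hkey : Real.log q ≤ x₀ * Real.log (x₀ + 1) := by
      nlinarith [hSeq, hsum, hmono]
    have hup : x₀ * Real.log (x₀ + 1) ≤ (L:ℝ) * Real.log ((L:ℝ) + 1) := by
      have hl1 : Real.log (x₀ + 1) ≤ Real.log ((L:ℝ) + 1) :=
        Real.log_le_log (by linarith) (by linarith)
      have hl0 : 0 ≤ Real.log (x₀ + 1) := Real.log_nonneg (by linarith)
      apply mul_le_mul hcon hl1 hl0 (by linarith)
    have hup2 : (L:ℝ) * Real.log ((L:ℝ) + 1) ≤ (L:ℝ)^2 := by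
      have h7 := Real.log_le_sub_one_of_pos (x := (L:ℝ) + 1) (by linarith)
      nlinarith
    linarith
  refine ⟨hmain, ?_⟩
  by_cases hm : ∃ m : ℕ, 0 < m ∧ x₀ = (m : ℝ)
  · obtain ⟨m, hm0, hmx⟩ := hm
    have hχ := hχ₁ ⟨m, hm0, hmx⟩
    have hfl : ⌊x₀⌋ = (m:ℤ) := by rw [hmx]; exact Int.floor_natCast m
    have hLm : L < (m:ℤ) := by
      have : (L:ℝ) < (m:ℝ) := by rw [← hmx]; exact hmain
      exact_mod_cast this
    omega
  · have hχ := hχ₂ hm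
    rw [hχ]
    exact Int.le_floor.mpr (le_of_lt hmain)
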